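/- Let G be an additive abelian group, m, n ≥ 2, A an m×n partial matrix over G, B an (m−1)×(n−1) matrix over G, and B̃ any m×n matrix over G with σ₋(B̃) = B. Then A is consistent with B (i.e., A has a completion C with σ₋(C) = B) if and only if the partial matrix A − B̃ is cycle-balanced. -/

import Mathlib

/-- The balanced collapsing sum of an `(m+1) × (n+1)` matrix. -/
def bcs {G : Type*} [AddCommGroup G] {m n : ℕ}
    (A : Matrix (Fin (m + 1)) (Fin (n + 1)) G) : Matrix (Fin m) (Fin n) G :=
  fun i j => A i.castSucc j.castSucc - A i.succ j.castSucc
    - A i.castSucc j.succ + A i.succ j.succ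

/-- `C` is a completion of the partial matrix `A` (blank entries are `none`). -/
def IsCompletion {G : Type*} {m n : ℕ} (A : Matrix (Fin m) (Fin n) (Option G))
    (C : Matrix (Fin m) (Fin n) G) : Prop :=
  ∀ i j, A i j ≠ none → A i j = some (C i j)

/-- The partial matrix `A − B`: entrywise difference on specified entries, blank otherwise. -/
def psub {G : Type*} [AddCommGroup G] {m n : ℕ} (A : Matrix (Fin m) (Fin n) (Option G))
    (B : Matrix (Fin m) (Fin n) G) : Matrix (Fin m) (Fin n) (Option G) :=
  fun i j => (A i j).map (fun g => g - B i j)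

/-- `(i, j)` describes a cycle in the partial matrix `A`: writing the index sequence
`(i 0, j 0, i 1, j 1, …, i k, j k, i 0)` (addition of indices is modulo `k + 1`),
the corresponding closed walk in the bipartite graph `H_A` uses only edges of `H_A`
and does not repeat edges. -/
def IsCycleIn {G : Type*} {m n : ℕ} (A : Matrix (Fin m) (Fin n) (Option G))
    {k : ℕ} (i : Fin (k + 1) → Fin m) (j : Fin (k + 1) → Fin n) : Prop :=
  (∀ r, A (i r) (j r) ≠ none) ∧
  (∀ r, A (i (r + 1)) (j r) ≠ none) ∧
  Function.Injective (fun p : Fin (k + 1) × Bool =>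
    if p.2 then (i p.1, j p.1) else (i (p.1 + 1), j p.1))

/-- The cycle `(i, j)` in `A` is balanced: `Σ_r (a_{i_r, j_r} − a_{i_{r+1}, j_r}) = 0`. -/
def IsBalancedCycle {G : Type*} [AddCommGroup G] {m n : ℕ}
    (A : Matrix (Fin m) (Fin n) (Option G))
    {k : ℕ} (i : Fin (k + 1) → Fin m) (j : Fin (k + 1) → Fin n) : Prop :=
  ∑ r : Fin (k + 1), ((A (i r) (j r)).getD 0 - (A (i (r + 1)) (j r)).getD 0) = 0

/-- A partial matrix is cycle-balanced if every cycle in it is balanced. -/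
def CycleBalanced {G : Type*} [AddCommGroup G] {m n : ℕ}
    (A : Matrix (Fin m) (Fin n) (Option G)) : Prop :=
  ∀ (k : ℕ) (i : Fin (k + 1) → Fin m) (j : Fin (k + 1) → Fin n),
    IsCycleIn A i j → IsBalancedCycle A i j

lemma bcs_col {G : Type*} [AddCommGroup G] {m n : ℕ}
    (D : Matrix (Fin (m + 1)) (Fin (n + 1)) G) (h : bcs D = 0)
    (j : Fin (n + 1)) (i : Fin m) :
    D i.succ j + D i.castSucc 0 = D i.castSucc j + D i.succ 0 := by
  induction j using Fin.induction with
  | zero => abel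
  | succ j ih =>
    have h1 : bcs D i j = 0 := by rw [h]; rfl
    rw [bcs] at h1
    have h2 : D i.succ j.succ
        = -(D i.castSucc j.castSucc - D i.succ j.castSucc - D i.castSucc j.succ) :=
      eq_neg_of_add_eq_zero_right h1
    rw [h2]
    have h3 : -(D i.castSucc j.castSucc - D i.succ j.castSucc - D i.castSucc j.succ)
        + D i.castSucc 0 = D i.castSucc j.succ + (D i.succ j.castSucc + D i.castSucc 0)
        - D i.castSucc j.castSucc := by abel
    rw [h3, ih]
    abel

lemma bcs_zero_potential {G : Type*} [AddCommGroup G] {m n : ℕ}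
    (D : Matrix (Fin (m + 1)) (Fin (n + 1)) G) (h : bcs D = 0) :
    ∃ (u : Fin (m+1) → G) (v : Fin (n+1) → G), ∀ i j, D i j = u i + v j := by
  refine ⟨fun i => D i 0 - D 0 0, fun j => D 0 j, fun i j => ?_⟩
  have key : ∀ (i : Fin (m+1)), D i j + D 0 0 = D i 0 + D 0 j := by
    intro i
    induction i using Fin.induction with
    | zero => abel
    | succ i ih =>
      have hc0 : D i.succ j = D i.castSucc j + D i.succ 0 - D i.castSucc 0 :=
        eq_sub_of_add_eq (bcs_col D h j i)
      rw [hc0]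
      have h3 : D i.castSucc j + D i.succ 0 - D i.castSucc 0 + D 0 0
          = (D i.castSucc j + D 0 0) + D i.succ 0 - D i.castSucc 0 := by abel
      rw [h3, ih]
      abel
  have := eq_sub_of_add_eq (key i)
  rw [this]
  show D i 0 + D 0 j - D 0 0 = D i 0 - D 0 0 + D 0 j
  abel

def graphOf {G : Type*} {m n : ℕ} (M : Matrix (Fin m) (Fin n) (Option G)) :
    SimpleGraph (Fin m ⊕ Fin n) where
  Adj a b := ∃ i j, M i j ≠ none ∧
    ((a = Sum.inl i ∧ b = Sum.inr j) ∨ (a = Sum.inr j ∧ b = Sum.inl i))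
  symm := by
    constructor
    rintro a b ⟨i, j, hne, ⟨ha, hb⟩ | ⟨ha, hb⟩⟩
    · exact ⟨i, j, hne, Or.inr ⟨hb, ha⟩⟩
    · exact ⟨i, j, hne, Or.inl ⟨hb, ha⟩⟩
  loopless := by
    constructor
    rintro a ⟨i, j, hne, ⟨ha, hb⟩ | ⟨ha, hb⟩⟩ <;> rw [ha] at hb <;> exact absurd hb (by simp)

lemma graphOf_adj {G : Type*} {m n : ℕ} {M : Matrix (Fin m) (Fin n) (Option G)}
    {i : Fin m} {j : Fin n} (h : M i j ≠ none) :
    (graphOf M).Adj (Sum.inl i) (Sum.inr j) :=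
  ⟨i, j, h, Or.inl ⟨rfl, rfl⟩⟩

lemma graphOf_adj_elim {G : Type*} {m n : ℕ} {M : Matrix (Fin m) (Fin n) (Option G)}
    {i : Fin m} {b : Fin m ⊕ Fin n} (h : (graphOf M).Adj (Sum.inl i) b) :
    ∃ j, b = Sum.inr j ∧ M i j ≠ none := by
  obtain ⟨i', j', hne, ⟨ha, hb⟩ | ⟨ha, hb⟩⟩ := h
  · obtain rfl : i' = i := by injection ha.symm
    exact ⟨j', hb, hne⟩
  · exact absurd ha (by simp)

lemma graphOf_adj_elim' {G : Type*} {m n : ℕ} {M : Matrix (Fin m) (Fin n) (Option G)}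
    {j : Fin n} {b : Fin m ⊕ Fin n} (h : (graphOf M).Adj (Sum.inr j) b) :
    ∃ i, b = Sum.inl i ∧ M i j ≠ none := by
  obtain ⟨i', j', hne, ⟨ha, hb⟩ | ⟨ha, hb⟩⟩ := h
  · exact absurd ha (by simp)
  · obtain rfl : j' = j := by injection ha.symm
    exact ⟨i', hb, hne⟩

lemma walk_extract {G : Type*} {m n : ℕ} (M : Matrix (Fin m) (Fin n) (Option G))
    (j0 : Fin n) :
    ∀ (N : ℕ) (i : Fin m) (w : (graphOf M).Walk (Sum.inl i) (Sum.inr j0)),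
      w.length ≤ N → w.support.Nodup →
    ∃ (k : ℕ) (p : Fin (k+1) → Fin m) (q : Fin (k+1) → Fin n),
      Function.Injective p ∧ Function.Injective q ∧ p 0 = i ∧ q (Fin.last k) = j0 ∧
      (∀ r, M (p r) (q r) ≠ none) ∧ (∀ r : Fin k, M (p r.succ) (q r.castSucc) ≠ none) ∧
      (∀ r, Sum.inl (p r) ∈ w.support) ∧ (∀ r, Sum.inr (q r) ∈ w.support) := by
  intro N
  induction N with
  | zero =>
    intro i w hlen _
    cases w with
    | cons h w' => simp at hlen
  | succ N IH =>
    intro i w hlen hnd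
    cases w with
    | cons h w' =>
      obtain ⟨j', rfl, hne⟩ := graphOf_adj_elim h
      cases w' with
      | nil =>
        -- single edge i - j', with j' = j0
        refine ⟨0, fun _ => i, fun _ => j0, ?_, ?_, rfl, rfl, fun r => hne,
          fun r => r.elim0, fun r => ?_, fun r => ?_⟩ <;>
          simp [Function.injective_of_subsingleton, SimpleGraph.Walk.support_cons]
      | cons h' w'' =>
        obtain ⟨i', rfl, hne'⟩ := graphOf_adj_elim' h'
        have hlen'' : w''.length ≤ N := by
          simp only [SimpleGraph.Walk.length_cons] at hlen; omega
        have hnd'' : w''.support.Nodup := by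
          simp only [SimpleGraph.Walk.support_cons, List.nodup_cons] at hnd
          exact hnd.2.2
        obtain ⟨k, p, q, hpi, hqi, hp0, hql, he1, he2, hmem1, hmem2⟩ :=
          IH i' w'' hlen'' hnd''
        have hinotin : Sum.inl i ∉ w''.support := by
          simp only [SimpleGraph.Walk.support_cons, List.nodup_cons, List.mem_cons] at hnd
          exact fun hc => hnd.1 (Or.inr hc)
        have hjnotin : Sum.inr j' ∉ w''.support := by
          simp only [SimpleGraph.Walk.support_cons, List.nodup_cons] at hnd
          exact hnd.2.1
        refine ⟨k + 1, Fin.cons i p, Fin.cons j' q, ?_, ?_, ?_, ?_, ?_, ?_, ?_, ?_⟩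
        · rw [Fin.cons_injective_iff]
          exact ⟨fun ⟨r, hr⟩ => hinotin (hr ▸ hmem1 r), hpi⟩
        · rw [Fin.cons_injective_iff]
          exact ⟨fun ⟨r, hr⟩ => hjnotin (hr ▸ hmem2 r), hqi⟩
        · simp
        · rw [show Fin.last (k+1) = (Fin.last k).succ from rfl, Fin.cons_succ]
          exact hql
        · intro r
          refine Fin.cases ?_ (fun s => ?_) r
          · simpa using hne
          · simpa using he1 s
        · intro r
          refine Fin.cases ?_ (fun s => ?_) r
          · rw [show (0 : Fin (k+1)).succ = (0 : Fin k.succ).succ from rfl,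
              Fin.cons_succ, show (0 : Fin (k+1)).castSucc = 0 from rfl, Fin.cons_zero]
            rw [hp0]; exact hne'
          · rw [show (s.succ).succ = (s.succ : Fin (k+1)).succ from rfl, Fin.cons_succ,
              show (s.succ).castSucc = (s.castSucc : Fin (k+1)).succ from
                (Fin.succ_castSucc s).symm, Fin.cons_succ]
            exact he2 s
        · intro r
          refine Fin.cases ?_ (fun s => ?_) r
          · simp [SimpleGraph.Walk.support_cons]
          · simp only [Fin.cons_succ, SimpleGraph.Walk.support_cons, List.mem_cons]
            right; right; exact hmem1 s
        · intro r
          refine Fin.cases ?_ (fun s => ?_) r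
          · simp [SimpleGraph.Walk.support_cons]
          · simp only [Fin.cons_succ, SimpleGraph.Walk.support_cons, List.mem_cons]
            right; right; exact hmem2 s

lemma castSucc_add_one' {k : ℕ} (s : Fin (k + 1)) :
    s.castSucc + 1 = s.succ := by
  apply Fin.ext
  rw [Fin.val_add_one, if_neg (Fin.castSucc_lt_last s).ne]
  simp

open scoped Classical in
lemma exists_potential {G : Type*} [AddCommGroup G] {m n : ℕ} :
    ∀ (N : ℕ) (M : Matrix (Fin m) (Fin n) (Option G)),
      (Finset.univ.filter fun p : Fin m × Fin n => M p.1 p.2 ≠ none).card ≤ N →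
      CycleBalanced M →
      ∃ (u : Fin m → G) (v : Fin n → G), ∀ i j g, M i j = some g → g = u i + v j := by
  intro N
  induction N with
  | zero =>
    intro M hcard _
    refine ⟨0, 0, fun i j g hg => ?_⟩
    have hmem : (i, j) ∈ Finset.univ.filter
        fun p : Fin m × Fin n => M p.1 p.2 ≠ none := by simp [hg]
    rw [Finset.card_eq_zero.mp (Nat.le_zero.mp hcard)] at hmem
    exact absurd hmem (Finset.notMem_empty _)
  | succ N IH =>
    intro M hcard hcb
    by_cases hall : ∀ i j, M i j = none
    · exact ⟨0, 0, fun i j g hg => by rw [hall] at hg; cases hg⟩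
    push_neg at hall
    obtain ⟨i0, j0, h00⟩ := hall
    obtain ⟨g0, hg0⟩ := Option.ne_none_iff_exists'.mp h00
    classical
    set M' : Matrix (Fin m) (Fin n) (Option G) :=
      fun i j => if i = i0 ∧ j = j0 then none else M i j with hM'def
    have hM'00 : M' i0 j0 = none := by simp [hM'def]
    have hM'eq : ∀ {i j}, ¬(i = i0 ∧ j = j0) → M' i j = M i j := by
      intro i j h; simp [hM'def, h]
    have hM'ne : ∀ {i j}, M' i j ≠ none → M i j = M' i j := by
      intro i j h
      by_cases hc : i = i0 ∧ j = j0
      · exact absurd (by simp [hM'def, hc]) h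
      · exact (hM'eq hc).symm
    -- card bound
    have hcard' : (Finset.univ.filter
        fun p : Fin m × Fin n => M' p.1 p.2 ≠ none).card ≤ N := by
      have hsub : (Finset.univ.filter fun p : Fin m × Fin n => M' p.1 p.2 ≠ none)
          ⊆ (Finset.univ.filter fun p : Fin m × Fin n => M p.1 p.2 ≠ none) := by
        intro p hp
        simp only [Finset.mem_filter, Finset.mem_univ, true_and] at hp ⊢
        intro hn
        exact hp (by by_cases hc : p.1 = i0 ∧ p.2 = j0 <;> simp [hM'def, hc, hn])
      have hlt : (Finset.univ.filter
          fun p : Fin m × Fin n => M' p.1 p.2 ≠ none).card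
          < (Finset.univ.filter fun p : Fin m × Fin n => M p.1 p.2 ≠ none).card := by
        refine Finset.card_lt_card ?_
        rw [Finset.ssubset_iff_of_subset hsub]
        exact ⟨(i0, j0), by simp [h00], by simp [hM'00]⟩
      omega
    -- cycle-balance transfers
    have hcb' : CycleBalanced M' := by
      intro k i j hc
      obtain ⟨h1, h2, h3⟩ := hc
      have hbal := hcb k i j ⟨fun r => by rw [hM'ne (h1 r)]; exact h1 r,
        fun r => by rw [hM'ne (h2 r)]; exact h2 r, h3⟩
      unfold IsBalancedCycle at hbal ⊢
      have hsum : ∑ r : Fin (k + 1), ((M' (i r) (j r)).getD 0 - (M' (i (r + 1)) (j r)).getD 0)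
          = ∑ r : Fin (k + 1), ((M (i r) (j r)).getD 0 - (M (i (r + 1)) (j r)).getD 0) :=
        Finset.sum_congr rfl fun r _ => by rw [← hM'ne (h1 r), ← hM'ne (h2 r)]
      rw [hsum]
      exact hbal
    obtain ⟨u, v, huv⟩ := IH M' hcard' hcb'
    by_cases hreach : (graphOf M').Reachable (Sum.inl i0) (Sum.inr j0)
    · -- reachable: u, v already work
      refine ⟨u, v, ?_⟩
      have hkey : g0 = u i0 + v j0 := by
        obtain ⟨w⟩ := hreach
        let W : (graphOf M').Walk (Sum.inl i0) (Sum.inr j0) := w.toPath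
        obtain ⟨k, p, q, hpi, hqi, hp0, hql, he1, he2, -, -⟩ :=
          walk_extract M' j0 W.length i0 W le_rfl w.toPath.2.support_nodup
        cases k with
        | zero =>
          exact absurd (show M' i0 j0 ≠ none from by
            have := he1 0
            rwa [hp0, show q 0 = j0 from hql] at this) (by simp [hM'00])
        | succ k' =>
          -- build a cycle in M
          have hc2 : ∀ r : Fin (k' + 1 + 1), M (p (r + 1)) (q r) ≠ none := by
            intro r
            by_cases hr : r = Fin.last (k' + 1)
            · subst hr
              rw [Fin.last_add_one, hp0, hql, hg0]
              simp
            · obtain ⟨s, rfl⟩ := Fin.exists_castSucc_eq.mpr hr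
              rw [castSucc_add_one', hM'ne (he2 s)]
              exact he2 s
          have hcyc : IsCycleIn M p q := by
            refine ⟨fun r => by rw [hM'ne (he1 r)]; exact he1 r, hc2, ?_⟩
            rintro ⟨r, b⟩ ⟨s, b'⟩ hrs
            simp only at hrs
            have hone : (1 : Fin (k' + 1 + 1)) ≠ 0 := by
              simp [Fin.ext_iff]
            have hsucc : ∀ a : Fin (k' + 1 + 1), a + 1 ≠ a := by
              intro a hcon
              have h' : a + 1 = a + 0 := by rw [add_zero]; exact hcon
              exact hone (add_left_cancel h')
            cases b <;> cases b' <;>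
              simp only [if_true, if_false, Bool.false_eq_true, Prod.mk.injEq] at hrs
            · obtain ⟨hq1, hq2⟩ := hrs
              rw [hqi hq2]
            · obtain ⟨hq1, hq2⟩ := hrs
              obtain rfl := hqi hq2
              exact absurd (hpi hq1) (hsucc _)
            · obtain ⟨hq1, hq2⟩ := hrs
              obtain rfl := hqi hq2
              exact absurd (hpi hq1).symm (hsucc _)
            · obtain ⟨hq1, hq2⟩ := hrs
              rw [hqi hq2]
          have hbal := hcb (k' + 1) p q hcyc
          unfold IsBalancedCycle at hbal
          rw [Finset.sum_sub_distrib] at hbal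
          have hval1 : ∀ r, (M (p r) (q r)).getD 0 = u (p r) + v (q r) := by
            intro r
            obtain ⟨g, hgg⟩ := Option.ne_none_iff_exists'.mp (he1 r)
            rw [hM'ne (he1 r), hgg]
            exact huv _ _ _ hgg
          have hval2 : ∀ s : Fin (k' + 1),
              (M (p s.succ) (q s.castSucc)).getD 0 = u (p s.succ) + v (q s.castSucc) := by
            intro s
            obtain ⟨g, hgg⟩ := Option.ne_none_iff_exists'.mp (he2 s)
            rw [hM'ne (he2 s), hgg]
            exact huv _ _ _ hgg
          have e1 : ∑ r : Fin (k' + 1 + 1), (M (p r) (q r)).getD 0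
              = (u (p 0) + ∑ s : Fin (k' + 1), u (p s.succ))
                + (∑ s : Fin (k' + 1), v (q s.castSucc) + v (q (Fin.last (k' + 1)))) := by
            rw [Finset.sum_congr rfl fun r _ => hval1 r, Finset.sum_add_distrib,
              Fin.sum_univ_succ (fun r => u (p r)),
              Fin.sum_univ_castSucc (fun r => v (q r))]
          have e2 : ∑ r : Fin (k' + 1 + 1), (M (p (r + 1)) (q r)).getD 0
              = (∑ s : Fin (k' + 1), u (p s.succ)
                + ∑ s : Fin (k' + 1), v (q s.castSucc)) + g0 := by
            rw [Fin.sum_univ_castSucc (fun r => (M (p (r + 1)) (q r)).getD 0)]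
            have hlast : (M (p (Fin.last (k' + 1) + 1)) (q (Fin.last (k' + 1)))).getD 0
                = g0 := by rw [Fin.last_add_one, hp0, hql, hg0]; rfl
            have hmain : ∑ s : Fin (k' + 1), (M (p (s.castSucc + 1)) (q s.castSucc)).getD 0
                = ∑ s : Fin (k' + 1), (u (p s.succ) + v (q s.castSucc)) :=
              Finset.sum_congr rfl fun s _ => by rw [castSucc_add_one']; exact hval2 s
            rw [hlast, hmain, Finset.sum_add_distrib]
          rw [e1, e2, hp0, hql] at hbal
          have hXY : (u i0 + ∑ s : Fin (k' + 1), u (p s.succ))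
              + (∑ s : Fin (k' + 1), v (q s.castSucc) + v j0)
              = (∑ s : Fin (k' + 1), u (p s.succ)
                + ∑ s : Fin (k' + 1), v (q s.castSucc)) + g0 := sub_eq_zero.mp hbal
          have hfin : u i0 + v j0 - g0
              = ((u i0 + ∑ s : Fin (k' + 1), u (p s.succ))
                + (∑ s : Fin (k' + 1), v (q s.castSucc) + v j0))
              - ((∑ s : Fin (k' + 1), u (p s.succ)
                + ∑ s : Fin (k' + 1), v (q s.castSucc)) + g0) := by abel
          rw [hXY, sub_self] at hfin
          exact (sub_eq_zero.mp hfin).symm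
      intro i j g hg
      by_cases hc : i = i0 ∧ j = j0
      · obtain ⟨rfl, rfl⟩ := hc
        rw [hg0] at hg
        injection hg with hg
        exact hg ▸ hkey
      · exact huv i j g (by rw [hM'eq hc]; exact hg)
    · -- not reachable: shift potentials on the component of (inr j0)
      refine ⟨fun i => if (graphOf M').Reachable (Sum.inl i) (Sum.inr j0)
          then u i - (g0 - u i0 - v j0) else u i,
        fun j => if (graphOf M').Reachable (Sum.inr j) (Sum.inr j0)
          then v j + (g0 - u i0 - v j0) else v j, ?_⟩
      intro i j g hg
      dsimp only
      by_cases hc : i = i0 ∧ j = j0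
      · obtain ⟨rfl, rfl⟩ := hc
        rw [hg0] at hg
        injection hg with hg
        rw [if_neg hreach, if_pos (SimpleGraph.Reachable.refl _), ← hg]
        abel
      · have hg' : M' i j = some g := by rw [hM'eq hc]; exact hg
        have hadj : (graphOf M').Adj (Sum.inl i) (Sum.inr j) :=
          graphOf_adj (by rw [hg']; simp)
        have hbase : g = u i + v j := huv i j g hg'
        by_cases hri : (graphOf M').Reachable (Sum.inl i) (Sum.inr j0)
        · have hrj : (graphOf M').Reachable (Sum.inr j) (Sum.inr j0) :=
            (hadj.symm.reachable).trans hri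
          rw [if_pos hri, if_pos hrj, hbase]
          abel
        · have hrj : ¬(graphOf M').Reachable (Sum.inr j) (Sum.inr j0) :=
            fun hr => hri (hadj.reachable.trans hr)
          rw [if_neg hri, if_neg hrj, hbase]

lemma potential_cycleBalanced {G : Type*} [AddCommGroup G] {m n : ℕ}
    (M : Matrix (Fin m) (Fin n) (Option G)) (u : Fin m → G) (v : Fin n → G)
    (h : ∀ i j g, M i j = some g → g = u i + v j) : CycleBalanced M := by
  intro k i j hc
  obtain ⟨h1, h2, -⟩ := hc
  unfold IsBalancedCycle
  have t1 : ∀ r, (M (i r) (j r)).getD 0 = u (i r) + v (j r) := by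
    intro r
    obtain ⟨g, hg⟩ := Option.ne_none_iff_exists'.mp (h1 r)
    rw [hg]
    exact h _ _ _ hg
  have t2 : ∀ r, (M (i (r + 1)) (j r)).getD 0 = u (i (r + 1)) + v (j r) := by
    intro r
    obtain ⟨g, hg⟩ := Option.ne_none_iff_exists'.mp (h2 r)
    rw [hg]
    exact h _ _ _ hg
  have hstep : ∑ r : Fin (k + 1), ((M (i r) (j r)).getD 0 - (M (i (r + 1)) (j r)).getD 0)
      = ∑ r : Fin (k + 1), (u (i r) - u (i (r + 1))) :=
    Finset.sum_congr rfl fun r _ => by rw [t1 r, t2 r]; abel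
  rw [hstep, Finset.sum_sub_distrib]
  rw [show ∑ r : Fin (k + 1), u (i (r + 1)) = ∑ r : Fin (k + 1), u (i r) from
    Fintype.sum_equiv (Equiv.addRight (1 : Fin (k + 1)))
      (fun r => u (i (r + 1))) (fun r => u (i r)) (fun x => rfl)]
  rw [sub_self]

theorem stmt13 {G : Type*} [AddCommGroup G] {m n : ℕ}
    (hm : 1 ≤ m) (hn : 1 ≤ n)
    (A : Matrix (Fin (m + 1)) (Fin (n + 1)) (Option G))
    (B : Matrix (Fin m) (Fin n) G)
    (Bt : Matrix (Fin (m + 1)) (Fin (n + 1)) G) (hBt : bcs Bt = B) :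
    (∃ C, IsCompletion A C ∧ bcs C = B) ↔ CycleBalanced (psub A Bt) := by
  constructor
  · rintro ⟨C, hC, hB⟩
    have hD : bcs (C - Bt) = 0 := by
      funext i j
      have h1 : bcs C i j = B i j := by rw [hB]
      have h2 : bcs Bt i j = B i j := by rw [hBt]
      simp only [bcs, Matrix.sub_apply, Matrix.zero_apply]
      simp only [bcs] at h1 h2
      rw [show C i.castSucc j.castSucc - Bt i.castSucc j.castSucc
          - (C i.succ j.castSucc - Bt i.succ j.castSucc)
          - (C i.castSucc j.succ - Bt i.castSucc j.succ)
          + (C i.succ j.succ - Bt i.succ j.succ)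
          = (C i.castSucc j.castSucc - C i.succ j.castSucc - C i.castSucc j.succ
            + C i.succ j.succ)
          - (Bt i.castSucc j.castSucc - Bt i.succ j.castSucc - Bt i.castSucc j.succ
            + Bt i.succ j.succ) from by abel, h1, h2, sub_self]
    obtain ⟨u, v, huv⟩ := bcs_zero_potential _ hD
    apply potential_cycleBalanced _ u v
    intro i j g hg
    simp only [psub, Option.map_eq_some_iff] at hg
    obtain ⟨g', hg', rfl⟩ := hg
    have hCij : A i j = some (C i j) := hC i j (by rw [hg']; simp)
    rw [hg'] at hCij
    injection hCij with hCij
    rw [hCij]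
    have := huv i j
    rw [Matrix.sub_apply] at this
    exact this
  · intro hcb
    obtain ⟨u, v, huv⟩ := exists_potential _ (psub A Bt) le_rfl hcb
    refine ⟨fun i j => u i + v j + Bt i j, ?_, ?_⟩
    · intro i j hne
      obtain ⟨g', hg'⟩ := Option.ne_none_iff_exists'.mp hne
      rw [hg']
      dsimp only
      have hps : psub A Bt i j = some (g' - Bt i j) := by simp [psub, hg']
      have hval := huv i j _ hps
      rw [sub_eq_iff_eq_add] at hval
      rw [← hval]
    · funext i j
      have h2 : bcs Bt i j = B i j := by rw [hBt]
      simp only [bcs] at h2 ⊢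
      rw [← h2]
      abel
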